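/- arXiv:2012.09061 — 6 statements merged into one kernel-verified Lean document; each statement's English description precedes it below -/
import Mathlib

section
/- For every n ≥ 2 and every symmetric n×n matrix A over ZMod 2 with zero diagonal, there exist subsets S_1, …, S_{n-1} of Fin n (some possibly empty) such that A = Σ_{k=1}^{n-1} K(S_k), where K(S) is the n×n matrix over ZMod 2 with K(S)_{ij} = 1 if i ≠ j and both i ∈ S and j ∈ S, and K(S)_{ij} = 0 otherwise. (Matrix form of Proposition 1: every CZ circuit can be realized by at most n−1 global CZ gates.) -/
open Matrix

/-- `Kmat S` is the adjacency matrix over `ZMod 2` of the complete graph on the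
subset `S ⊆ Fin n`: its `(i,j)` entry is `1` iff `i ≠ j` and `i, j ∈ S`. -/
def Kmat {n : ℕ} (S : Finset (Fin n)) : Matrix (Fin n) (Fin n) (ZMod 2) :=
  Matrix.of fun i j => if i ≠ j ∧ i ∈ S ∧ j ∈ S then 1 else 0

lemma Kmat_empty {n : ℕ} : Kmat (∅ : Finset (Fin n)) = 0 := by
  ext i j; simp [Kmat]

lemma Kmat_diag {n : ℕ} (S : Finset (Fin n)) (i : Fin n) : Kmat S i i = 0 := by
  simp [Kmat]

lemma Kmat_symm {n : ℕ} (S : Finset (Fin n)) : (Kmat S)ᵀ = Kmat S := by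
  ext i j
  simp only [Kmat, Matrix.transpose_apply, Matrix.of_apply]
  refine if_congr ?_ rfl rfl
  constructor
  · rintro ⟨h1, h2, h3⟩; exact ⟨h1.symm, h3, h2⟩
  · rintro ⟨h1, h2, h3⟩; exact ⟨h1.symm, h3, h2⟩

lemma key (n : ℕ) : ∀ m : ℕ, ∀ A : Matrix (Fin n) (Fin n) (ZMod 2),
    Aᵀ = A → (∀ i, A i i = 0) →
    (∀ i j : Fin n, m < i.val ∨ m < j.val → A i j = 0) →
    ∃ S : Fin m → Finset (Fin n), A = ∑ k, Kmat (S k) := by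
  intro m
  induction m with
  | zero =>
    intro A hs hd hsupp
    refine ⟨fun _ => ∅, ?_⟩
    ext i j
    simp only [Finset.univ_eq_empty, Finset.sum_empty, Matrix.zero_apply]
    by_cases hij : i = j
    · subst hij; exact hd i
    · apply hsupp
      have hij' : i.val ≠ j.val := fun h => hij (Fin.ext h)
      omega
  | succ m ih =>
    intro A hs hd hsupp
    by_cases hm : m + 1 < n
    · -- eliminate the vertex v with value m+1
      set v : Fin n := ⟨m + 1, hm⟩ with hv
      set T : Finset (Fin n) :=
        insert v (Finset.univ.filter (fun j => A v j = 1)) with hT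
      have hvT : v ∈ T := Finset.mem_insert_self _ _
      have hjT : ∀ j : Fin n, j ≠ v → (j ∈ T ↔ A v j = 1) := by
        intro j hj
        simp [hT, hj]
      set A' : Matrix (Fin n) (Fin n) (ZMod 2) := A + Kmat T with hA'
      have hzero : ∀ x : ZMod 2, x + x = 0 := by decide
      -- A' has support in values ≤ m
      have hsupp' : ∀ i j : Fin n, m < i.val ∨ m < j.val → A' i j = 0 := by
        have hrow : ∀ i j : Fin n, m < i.val → A' i j = 0 := by
          intro i j hi
          by_cases hiv : i = v
          · subst hiv
            by_cases hjv : j = v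
            · subst hjv
              simp [hA', hd, Kmat_diag]
            · have hK : Kmat T v j = A v j := by
                rcases (by decide : ∀ x : ZMod 2, x = 0 ∨ x = 1) (A v j) with h0 | h1
                · have : j ∉ T := fun hjT' => by
                    rw [hjT j hjv] at hjT'; rw [hjT'] at h0; exact one_ne_zero h0
                  simp [Kmat, this, h0]
                · have hjT' : j ∈ T := (hjT j hjv).2 h1
                  have hne : v ≠ j := fun h => hjv h.symm
                  simp [Kmat, hne, hvT, hjT', h1]
              simp only [hA', Matrix.add_apply, hK]
              exact hzero _
          · -- i.val ≠ m+1, so i.val > m+1, row of A is zero and i ∉ T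
            have hiv' : i.val ≠ m + 1 := fun h => hiv (Fin.ext h)
            have hi2 : m + 1 < i.val := by omega
            have hiT : i ∉ T := by
              intro hiT'
              rcases Finset.mem_insert.1 hiT' with h | h
              · exact hiv h
              · have := Finset.mem_filter.1 h
                have h0 : A v i = 0 := hsupp v i (Or.inr hi2)
                rw [h0] at this
                exact one_ne_zero this.2.symm
            have hK : Kmat T i j = 0 := by simp [Kmat, hiT]
            have h0 : A i j = 0 := hsupp i j (Or.inl hi2)
            simp [hA', hK, h0]
        intro i j hij
        rcases hij with hi | hj
        · exact hrow i j hi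
        · have hsymm' : A' ᵀ = A' := by
            rw [hA', Matrix.transpose_add, hs, Kmat_symm]
          have := congrFun (congrFun hsymm' j) i
          rw [Matrix.transpose_apply] at this
          rw [this]
          exact hrow j i hj
      have hs' : A' ᵀ = A' := by rw [hA', Matrix.transpose_add, hs, Kmat_symm]
      have hd' : ∀ i, A' i i = 0 := by
        intro i; simp [hA', hd, Kmat_diag]
      obtain ⟨S', hS'⟩ := ih A' hs' hd' hsupp'
      refine ⟨Fin.snoc S' T, ?_⟩
      have hAA : A = A' + Kmat T := by
        rw [hA', add_assoc]
        ext i j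
        simp only [Matrix.add_apply]
        rw [hzero (Kmat T i j), add_zero]
      rw [hAA, hS', Fin.sum_univ_castSucc]
      simp
    · -- m + 1 ≥ n : support hypothesis is vacuous, pad with ∅
      obtain ⟨S', hS'⟩ := ih A hs hd (fun i j h => by
        have hi := i.isLt; have hj := j.isLt; omega)
      refine ⟨Fin.snoc S' ∅, ?_⟩
      rw [hS', Fin.sum_univ_castSucc]
      simp [Kmat_empty]

/-- Every symmetric matrix over `ZMod 2` with zero diagonal is a sum of at most
`n - 1` complete-graph adjacency matrices (matrix form of Proposition 1). -/
theorem cz_circuit_as_sum_of_cliques (n : ℕ) (hn : 2 ≤ n)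
    (A : Matrix (Fin n) (Fin n) (ZMod 2))
    (hsymm : Aᵀ = A) (hdiag : ∀ i, A i i = 0) :
    ∃ S : Fin (n - 1) → Finset (Fin n), A = ∑ k, Kmat (S k) := by
  apply key n (n - 1) A hsymm hdiag
  intro i j h
  have hi := i.isLt; have hj := j.isLt
  omega
end

section
/- For every n ≥ 2 and every set E of unordered pairs of distinct elements of Fin n (a simple graph), there exist subsets S_1, …, S_{n-1} of Fin n (some possibly empty) such that ∏_{{i,j} ∈ E} CZ_{ij} = ∏_{k=1}^{n-1} GCZ_{S_k}. (Proposition 1, operator form: an n-qubit circuit consisting of just CZ gates can be implemented using at most n−1 global CZ gates.) -/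
open Matrix

noncomputable section

/-- `2^n × 2^n` matrices, indexed by computational basis states `x : Fin n → Bool`. -/
abbrev NQMatrix (n : ℕ) := Matrix (Fin n → Bool) (Fin n → Bool) ℂ

/-- A bit counted as 0 or 1. -/
def bitv (b : Bool) : ℕ := if b then 1 else 0

/-- A bit as an index into a 2×2 matrix. -/
def bIdx (b : Bool) : Fin 2 := if b then 1 else 0

/-- The n-fold Kronecker product of 2×2 matrices. -/
def kron {n : ℕ} (f : Fin n → Matrix (Fin 2) (Fin 2) ℂ) : NQMatrix n :=
  Matrix.of fun x y => ∏ i, f i (bIdx (x i)) (bIdx (y i))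

def PX : Matrix (Fin 2) (Fin 2) ℂ := !![0, 1; 1, 0]
def PY : Matrix (Fin 2) (Fin 2) ℂ := !![0, -Complex.I; Complex.I, 0]
def PZ : Matrix (Fin 2) (Fin 2) ℂ := !![1, 0; 0, -1]

/-- The Hadamard matrix. -/
def HMat : Matrix (Fin 2) (Fin 2) ℂ := ((Real.sqrt 2)⁻¹ : ℝ) • !![1, 1; 1, -1]

/-- The 2×2 matrix `A` applied at position `i`, identity elsewhere. -/
def gate1 {n : ℕ} (A : Matrix (Fin 2) (Fin 2) ℂ) (i : Fin n) : NQMatrix n :=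
  kron (fun j => if j = i then A else 1)

lemma diag_comm {m : Type*} [Fintype m] [DecidableEq m] (d e : m → ℂ) :
    Commute (Matrix.diagonal d) (Matrix.diagonal e) := by
  unfold Commute SemiconjBy
  rw [Matrix.diagonal_mul_diagonal, Matrix.diagonal_mul_diagonal]
  exact congrArg Matrix.diagonal (funext fun i => mul_comm (d i) (e i))

/-- The two-qubit ZZ interaction gate `ZZ_{ij}(α)`. -/
def ZZgate {n : ℕ} (i j : Fin n) (α : ℝ) : NQMatrix n :=
  Matrix.diagonal fun x =>
    Complex.exp (-Complex.I * (α / 2) * (-1 : ℂ) ^ (bitv (x i) + bitv (x j)))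

/-- The global ZZ gate on a subset `S`: the product of `ZZgate i j α` over all
unordered pairs `{i,j} ⊆ S` with `i ≠ j`. -/
def GZZ {n : ℕ} (S : Finset (Fin n)) (α : ℝ) : NQMatrix n :=
  ((S ×ˢ S).filter fun p => p.1 < p.2).noncommProd (fun p => ZZgate p.1 p.2 α)
    (fun _ _ _ _ _ => diag_comm _ _)

/-- The two-qubit CZ gate. -/
def CZgate {n : ℕ} (i j : Fin n) : NQMatrix n :=
  Matrix.diagonal fun x => (-1 : ℂ) ^ (bitv (x i) * bitv (x j))

/-- The global CZ gate on a subset `S`: the product of `CZgate i j` over all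
unordered pairs `{i,j} ⊆ S` with `i ≠ j`. -/
def GCZ {n : ℕ} (S : Finset (Fin n)) : NQMatrix n :=
  ((S ×ˢ S).filter fun p => p.1 < p.2).noncommProd (fun p => CZgate p.1 p.2)
    (fun _ _ _ _ _ => diag_comm _ _)

/-- Flip the bits at positions in `S`. -/
def flipS {n : ℕ} (S : Finset (Fin n)) (x : Fin n → Bool) : Fin n → Bool :=
  fun i => if i ∈ S then !(x i) else x i

/-- The layer of NOT gates on the qubits in `S`, as a permutation matrix. -/
def XS {n : ℕ} (S : Finset (Fin n)) : NQMatrix n :=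
  Matrix.of fun x y => if y = flipS S x then 1 else 0

/-- The CNOT gate with control `c` and target `t`, as a permutation matrix. -/
def CNOT {n : ℕ} (c t : Fin n) : NQMatrix n :=
  Matrix.of fun x y => if y = Function.update x t (xor (x t) (x c)) then 1 else 0

/-- The targeted global Mølmer–Sørensen gate on the subset `S`:
`GMS_S(α) = exp(-i·(α/4)·Σ_{i ≠ j ∈ S} X_i·X_j)`, the sum ranging over ordered
pairs of distinct elements of `S`. -/
def GMS {n : ℕ} (S : Finset (Fin n)) (α : ℝ) : NQMatrix n :=
  NormedSpace.exp ((-Complex.I * (α / 4)) •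
    ∑ p ∈ (S ×ˢ S).filter (fun p => p.1 ≠ p.2), gate1 PX p.1 * gate1 PX p.2)


/-- the `k`-th pivot vertex -/
def czVtx (m k : ℕ) : Fin (m + 2) := ⟨min k (m + 1), by omega⟩

/-- elimination sequence -/
def czB (m : ℕ) (A : Fin (m+2) → Fin (m+2) → ZMod 2) : ℕ → Fin (m+2) → Fin (m+2) → ZMod 2
  | 0 => A
  | (k+1) => fun i j =>
      czB m A k i j +
        (if i = czVtx m k then 1 else czB m A k (czVtx m k) i) *
        (if j = czVtx m k then 1 else czB m A k (czVtx m k) j)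

def czS (m : ℕ) (A : Fin (m+2) → Fin (m+2) → ZMod 2) (k : ℕ) (i : Fin (m+2)) : ZMod 2 :=
  if i = czVtx m k then 1 else czB m A k (czVtx m k) i

lemma czB_succ (m : ℕ) (A : Fin (m+2) → Fin (m+2) → ZMod 2) (k : ℕ) (i j : Fin (m+2)) :
    czB m A (k+1) i j = czB m A k i j + czS m A k i * czS m A k j := rfl

lemma czB_inv (m : ℕ) (A : Fin (m+2) → Fin (m+2) → ZMod 2)
    (hsym : ∀ i j, A i j = A j i) (k : ℕ) (hk : k ≤ m + 1) :
    (∀ i j, czB m A k i j = czB m A k j i) ∧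
      (∀ i j : Fin (m+2), i ≠ j → (i.val < k ∨ j.val < k) → czB m A k i j = 0) := by
  induction k with
  | zero => exact ⟨hsym, fun i j _ h => by omega⟩
  | succ k ih =>
    obtain ⟨hs, hz⟩ := ih (by omega)
    have hv : (czVtx m k).val = k := by simp only [czVtx]; omega
    have h2 : ∀ a : ZMod 2, a + a = 0 := by decide
    refine ⟨fun i j => by rw [czB_succ, czB_succ, hs i j]; ring, ?_⟩
    intro i j hij hlt
    rw [czB_succ]
    unfold czS
    rcases hlt with hlt | hlt
    · by_cases hiv : i = czVtx m k
      · have hjv : j ≠ czVtx m k := fun h => hij (hiv.trans h.symm)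
        rw [if_pos hiv, if_neg hjv, one_mul, ← hiv, hs i j]
        exact h2 _
      · have hik : i.val < k := by
          rcases Nat.lt_succ_iff_lt_or_eq.mp hlt with h | h
          · exact h
          · exact absurd (Fin.ext (h.trans hv.symm)) hiv
        have hzi : czB m A k (czVtx m k) i = 0 :=
          hz _ i (fun h => hiv h.symm) (Or.inr hik)
        rw [if_neg hiv, hzi, zero_mul, add_zero]
        exact hz i j hij (Or.inl hik)
    · by_cases hjv : j = czVtx m k
      · have hiv : i ≠ czVtx m k := fun h => hij (h.trans hjv.symm)
        rw [if_pos hjv, if_neg hiv, mul_one, ← hjv, hs j i, hs i j]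
        exact h2 _
      · have hjk : j.val < k := by
          rcases Nat.lt_succ_iff_lt_or_eq.mp hlt with h | h
          · exact h
          · exact absurd (Fin.ext (h.trans hv.symm)) hjv
        have hzj : czB m A k (czVtx m k) j = 0 :=
          hz _ j (fun h => hjv h.symm) (Or.inr hjk)
        rw [if_neg hjv, hzj, mul_zero, add_zero]
        exact hz i j hij (Or.inr hjk)

lemma czB_telescope (m : ℕ) (A : Fin (m+2) → Fin (m+2) → ZMod 2) (i j : Fin (m+2)) (t : ℕ) :
    czB m A t i j = A i j + ∑ k ∈ Finset.range t, czS m A k i * czS m A k j := by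
  induction t with
  | zero => simp [czB]
  | succ t ih => rw [czB_succ, ih, Finset.sum_range_succ]; ring

/-- Core combinatorial lemma: a symmetric matrix over `ZMod 2` agrees off the diagonal
with a sum of `m+1` rank-one squares. -/
lemma cz_core (m : ℕ) (A : Fin (m+2) → Fin (m+2) → ZMod 2) (hsym : ∀ i j, A i j = A j i) :
    ∃ s : Fin (m+1) → Fin (m+2) → ZMod 2, ∀ i j, i ≠ j → A i j = ∑ k, s k i * s k j := by
  refine ⟨fun k => czS m A k.val, fun i j hij => ?_⟩
  have hzero : czB m A (m+1) i j = 0 := by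
    refine (czB_inv m A hsym (m+1) le_rfl).2 i j hij ?_
    have := i.isLt; have := j.isLt
    by_cases h : i.val < m + 1
    · exact Or.inl h
    · refine Or.inr ?_
      have : i.val = m + 1 := by omega
      have : j.val ≠ m + 1 := fun hj => hij (Fin.ext (by omega))
      omega
  have ht := czB_telescope m A i j (m+1)
  rw [hzero] at ht
  have h2 : ∀ a b : ZMod 2, 0 = a + b → a = b := by decide
  rw [h2 _ _ ht, Fin.sum_univ_eq_sum_range (fun k => czS m A k i * czS m A k j) (m+1)]


section Glue

lemma neg_one_pow_congr' (a b : ℕ) (h : (a : ZMod 2) = (b : ZMod 2)) :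
    ((-1 : ℂ)) ^ a = (-1) ^ b := by
  rw [neg_one_pow_eq_pow_mod_two, neg_one_pow_eq_pow_mod_two (n := b)]
  congr 1
  exact (ZMod.natCast_eq_natCast_iff a b 2).mp h

lemma diagonal_noncommProd {N : ℕ} {ι : Type*} (F : Finset ι)
    (d : ι → ((Fin N → Bool) → ℂ)) (comm) :
    F.noncommProd (fun p => Matrix.diagonal (d p)) comm
      = Matrix.diagonal (fun x => ∏ p ∈ F, d p x) := by
  have h := Finset.map_noncommProd F d (fun _ _ _ _ _ => Commute.all _ _)
      (Matrix.diagonalRingHom (Fin N → Bool) ℂ)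
  rw [Finset.noncommProd_eq_prod] at h
  calc F.noncommProd (fun p => Matrix.diagonal (d p)) comm
      = Matrix.diagonalRingHom (Fin N → Bool) ℂ (∏ p ∈ F, d p) := h.symm
    _ = Matrix.diagonal fun x => ∏ p ∈ F, d p x :=
        congrArg Matrix.diagonal (funext fun x => Finset.prod_apply x F d)

lemma noncommProd_CZgate {N : ℕ} (F : Finset (Fin N × Fin N)) (comm) :
    F.noncommProd (fun p => CZgate p.1 p.2) comm
      = Matrix.diagonal (fun x => (-1 : ℂ) ^ ∑ p ∈ F, bitv (x p.1) * bitv (x p.2)) := by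
  have h := diagonal_noncommProd F
      (fun p x => (-1 : ℂ) ^ (bitv (x p.1) * bitv (x p.2))) comm
  exact h.trans (congrArg Matrix.diagonal (funext fun x =>
    Finset.prod_pow_eq_pow_sum F (fun p => bitv (x p.1) * bitv (x p.2)) (-1)))

lemma GCZ_eq_diagonal {N : ℕ} (S : Finset (Fin N)) :
    GCZ S = Matrix.diagonal (fun x =>
      (-1 : ℂ) ^ ∑ p ∈ (S ×ˢ S).filter (fun p => p.1 < p.2),
        bitv (x p.1) * bitv (x p.2)) :=
  noncommProd_CZgate _ _

end Glue

/-- Proposition 1 (operator form): any circuit of CZ gates, given by a set `E` of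
unordered pairs of distinct qubits (each pair `{i,j}` represented as `(i,j)` with
`i < j`), equals a product of at most `n - 1` global CZ gates. -/
theorem cz_circuit_by_gcz_gates (n : ℕ) (hn : 2 ≤ n)
    (E : Finset (Fin n × Fin n)) (hE : ∀ p ∈ E, p.1 < p.2) :
    ∃ S : Fin (n - 1) → Finset (Fin n),
      E.noncommProd (fun p => CZgate p.1 p.2) (fun _ _ _ _ _ => diag_comm _ _)
        = (List.ofFn fun k : Fin (n - 1) => GCZ (S k)).prod := by
  obtain ⟨m, rfl⟩ : ∃ m, n = m + 2 := ⟨n - 2, by omega⟩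
  classical
  set A : Fin (m + 2) → Fin (m + 2) → ZMod 2 :=
    fun i j => if (i, j) ∈ E ∨ (j, i) ∈ E then 1 else 0 with hA
  obtain ⟨s, hs⟩ := cz_core m A (fun i j => by simp only [hA, or_comm])
  set S : Fin (m + 1) → Finset (Fin (m + 2)) :=
    fun k => Finset.univ.filter (fun i => s k i = 1) with hSdef
  refine ⟨S, ?_⟩
  have hmemS : ∀ (k : Fin (m + 1)) (i : Fin (m + 2)), i ∈ S k ↔ s k i = 1 := by
    intro k i; simp [hSdef]
  refine Eq.trans (noncommProd_CZgate E _) ?_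
  have hlist : (List.ofFn fun k : Fin (m + 1) => GCZ (S k)).prod
      = Matrix.diagonal (fun x => (-1 : ℂ) ^ ∑ k : Fin (m + 1),
          ∑ p ∈ ((S k) ×ˢ (S k)).filter (fun p => p.1 < p.2),
            bitv (x p.1) * bitv (x p.2)) := by
    set g : Fin (m + 1) → ((Fin (m + 2) → Bool) → ℂ) := fun k x =>
      (-1 : ℂ) ^ ∑ p ∈ ((S k) ×ˢ (S k)).filter (fun p => p.1 < p.2),
        bitv (x p.1) * bitv (x p.2) with hg
    have h1 : (List.ofFn fun k : Fin (m + 1) => GCZ (S k))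
        = (List.ofFn g).map (Matrix.diagonalRingHom (Fin (m + 2) → Bool) ℂ) := by
      rw [List.map_ofFn]
      congr 1
      funext k
      exact GCZ_eq_diagonal (S k)
    rw [h1, ← map_list_prod (Matrix.diagonalRingHom (Fin (m + 2) → Bool) ℂ),
      List.prod_ofFn]
    show Matrix.diagonal (∏ k, g k) = _
    refine congrArg Matrix.diagonal (funext fun x => ?_)
    rw [Finset.prod_apply]
    exact Finset.prod_pow_eq_pow_sum Finset.univ _ (-1)
  refine Eq.trans ?_ hlist.symm
  refine congrArg Matrix.diagonal (funext fun x => ?_)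
  apply neg_one_pow_congr'
  push_cast
  set χ : Fin (m + 2) → ZMod 2 := fun i => ((bitv (x i) : ℕ) : ZMod 2) with hχ
  set P : Finset (Fin (m + 2) × Fin (m + 2)) :=
    (Finset.univ ×ˢ Finset.univ).filter (fun p => p.1 < p.2) with hP
  have hmemP : ∀ p : Fin (m + 2) × Fin (m + 2), p ∈ P ↔ p.1 < p.2 := by
    intro p; simp [hP]
  have hEP : E ⊆ P := fun p hp => (hmemP p).mpr (hE p hp)
  have step1 : ∑ p ∈ E, χ p.1 * χ p.2
      = ∑ p ∈ P, A p.1 p.2 * (χ p.1 * χ p.2) := by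
    have h1 : ∀ p ∈ P, A p.1 p.2 * (χ p.1 * χ p.2)
        = if p ∈ E then χ p.1 * χ p.2 else 0 := by
      intro p hp
      have hlt := (hmemP p).mp hp
      have hswap : (p.2, p.1) ∉ E := fun h => absurd (hE _ h) (not_lt.mpr hlt.le)
      have : A p.1 p.2 = if p ∈ E then 1 else 0 := by
        simp only [hA]
        congr 1
        simp only [eq_iff_iff, or_iff_left_iff_imp]
        exact fun h => absurd h hswap
      rw [this, ite_mul, one_mul, zero_mul]
    rw [Finset.sum_congr rfl h1, Finset.sum_ite_mem,
      Finset.inter_eq_right.mpr hEP]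
  have hsval : ∀ (k : Fin (m + 1)) (i : Fin (m + 2)),
      s k i = if i ∈ S k then 1 else 0 := by
    intro k i
    by_cases h : i ∈ S k
    · rw [if_pos h]; exact (hmemS k i).mp h
    · rw [if_neg h]
      have h0 : ∀ a : ZMod 2, a ≠ 1 → a = 0 := by decide
      exact h0 _ (fun h1 => h ((hmemS k i).mpr h1))
  have step2 : ∀ k : Fin (m + 1),
      ∑ p ∈ ((S k) ×ˢ (S k)).filter (fun p => p.1 < p.2), χ p.1 * χ p.2
        = ∑ p ∈ P, s k p.1 * s k p.2 * (χ p.1 * χ p.2) := by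
    intro k
    have hset : ((S k) ×ˢ (S k)).filter (fun p => p.1 < p.2)
        = P.filter (fun p => p.1 ∈ S k ∧ p.2 ∈ S k) := by
      ext p
      simp only [Finset.mem_filter, Finset.mem_product, hmemP, Finset.mem_univ]
      tauto
    rw [hset, Finset.sum_filter]
    refine Finset.sum_congr rfl fun p hp => ?_
    rw [hsval k p.1, hsval k p.2]
    by_cases h1 : p.1 ∈ S k <;> by_cases h2 : p.2 ∈ S k <;>
      simp [h1, h2]
  calc ∑ p ∈ E, χ p.1 * χ p.2
      = ∑ p ∈ P, A p.1 p.2 * (χ p.1 * χ p.2) := step1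
    _ = ∑ p ∈ P, (∑ k : Fin (m + 1), s k p.1 * s k p.2) * (χ p.1 * χ p.2) := by
        refine Finset.sum_congr rfl fun p hp => ?_
        rw [← hs p.1 p.2 (Fin.ne_of_lt ((hmemP p).mp hp))]
    _ = ∑ k : Fin (m + 1), ∑ p ∈ P, s k p.1 * s k p.2 * (χ p.1 * χ p.2) := by
        rw [Finset.sum_comm]
        exact Finset.sum_congr rfl fun p _ => by rw [Finset.sum_mul]
    _ = ∑ k : Fin (m + 1),
          ∑ p ∈ ((S k) ×ˢ (S k)).filter (fun p => p.1 < p.2), χ p.1 * χ p.2 := by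
        exact Finset.sum_congr rfl fun k _ => (step2 k).symm
end
end

section
/- For any n ≥ 2, any subsets S ⊆ Q ⊆ Fin n, and any real α: GZZ_Q(α) · X_S · GZZ_Q(α) · X_S = GZZ_{Q∖S}(2α) · GZZ_S(2α). (Proposition 2: applying a pair of GZZ(α) gates on a set Q with NOT gates in between on the qubits S equals applying a GZZ(2α) gate on each of the sets Q∖S and S.) -/
open Matrix

noncomputable section

-- Auxiliary lemmas ---------------------------------------------------------

lemma noncommProd_diagonal {m : Type*} [Fintype m] [DecidableEq m] {ι : Type*}
    (s : Finset ι) (g : ι → m → ℂ) (comm) :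
    s.noncommProd (fun p => Matrix.diagonal (g p)) comm
      = Matrix.diagonal (fun x => ∏ p ∈ s, g p x) := by
  have h := (Finset.map_noncommProd s g (fun _ _ _ _ _ => Commute.all _ _)
    (Matrix.diagonalRingHom m ℂ).toMonoidHom).symm
  refine h.trans ?_
  rw [Finset.noncommProd_eq_prod]
  show Matrix.diagonal _ = _
  rw [show s.prod g = fun x => ∏ p ∈ s, g p x from funext fun x => Finset.prod_apply x s g]

lemma GZZ_diag {n : ℕ} (T : Finset (Fin n)) (α : ℝ) :
    GZZ T α = Matrix.diagonal (fun x => ∏ p ∈ (T ×ˢ T).filter fun p => p.1 < p.2,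
      Complex.exp (-Complex.I * (α / 2) * (-1 : ℂ) ^ (bitv (x p.1) + bitv (x p.2)))) :=
  noncommProd_diagonal _ _ _

lemma flipS_flipS {n : ℕ} (S : Finset (Fin n)) (x : Fin n → Bool) :
    flipS S (flipS S x) = x := by
  funext i; simp only [flipS]; split <;> simp

lemma XS_conj {n : ℕ} (S : Finset (Fin n)) (d : (Fin n → Bool) → ℂ) :
    XS S * Matrix.diagonal d * XS S = Matrix.diagonal (fun x => d (flipS S x)) := by
  have h1 : XS S * Matrix.diagonal d
      = Matrix.of (fun x y => if y = flipS S x then d y else 0) := by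
    ext x y
    simp only [Matrix.mul_apply, XS, Matrix.of_apply, Matrix.diagonal_apply, ite_mul, one_mul,
      zero_mul, mul_ite, mul_zero]
    rw [Finset.sum_ite_eq' Finset.univ y]
    simp only [Finset.mem_univ, if_true]
  rw [h1]
  ext x y
  simp only [Matrix.mul_apply, XS, Matrix.of_apply, Matrix.diagonal_apply, ite_mul, one_mul,
    zero_mul, mul_ite, mul_one, mul_zero]
  have hsw : ∀ z : Fin n → Bool,
      (if y = flipS S z then (if z = flipS S x then d z else 0) else 0)
        = (if z = flipS S x then (if y = flipS S z then d z else 0) else 0) := by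
    intro z; split_ifs <;> rfl
  rw [Finset.sum_congr rfl fun z _ => hsw z, Finset.sum_ite_eq' Finset.univ (flipS S x)]
  simp only [Finset.mem_univ, if_true, flipS_flipS]
  by_cases h : x = y
  · subst h; simp
  · simp [h, Ne.symm h]

lemma sgn_not (b : Bool) : ((-1 : ℂ)) ^ bitv (!b) = -((-1 : ℂ)) ^ bitv b := by
  cases b <;> simp [bitv]

lemma neg_one_flip_both (a b : Bool) :
    ((-1 : ℂ)) ^ (bitv (!a) + bitv (!b)) = (-1 : ℂ) ^ (bitv a + bitv b) := by
  cases a <;> cases b <;> norm_num [bitv]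

lemma neg_one_flip_left (a b : Bool) :
    ((-1 : ℂ)) ^ (bitv (!a) + bitv b) = -(-1 : ℂ) ^ (bitv a + bitv b) := by
  cases a <;> cases b <;> norm_num [bitv]

lemma neg_one_flip_right (a b : Bool) :
    ((-1 : ℂ)) ^ (bitv a + bitv (!b)) = -(-1 : ℂ) ^ (bitv a + bitv b) := by
  cases a <;> cases b <;> norm_num [bitv]

lemma e_same (α : ℝ) (s : ℂ) :
    Complex.exp (-Complex.I * ((α : ℂ) / 2) * s) * Complex.exp (-Complex.I * ((α : ℂ) / 2) * s)
      = Complex.exp (-Complex.I * (((2 * α : ℝ) : ℂ) / 2) * s) := by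
  rw [← Complex.exp_add]
  congr 1
  push_cast
  ring

lemma e_opp (α : ℝ) (s : ℂ) :
    Complex.exp (-Complex.I * ((α : ℂ) / 2) * s)
      * Complex.exp (-Complex.I * ((α : ℂ) / 2) * (-s)) = 1 := by
  rw [← Complex.exp_add,
    show -Complex.I * ((α : ℂ) / 2) * s + -Complex.I * ((α : ℂ) / 2) * (-s) = 0 by ring,
    Complex.exp_zero]

/-- Proposition 2: applying a pair of `GZZ(α)` gates on a set `Q` with NOT gates
in between them on the qubits `S ⊆ Q` is equal to applying a `GZZ(2α)` gate on
each of the sets `Q \ S` and `S`. -/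
theorem gzz_with_nots_splits (n : ℕ) (hn : 2 ≤ n) (Q S : Finset (Fin n))
    (hSQ : S ⊆ Q) (α : ℝ) :
    GZZ Q α * XS S * GZZ Q α * XS S = GZZ (Q \ S) (2 * α) * GZZ S (2 * α) := by
  have hassoc : GZZ Q α * XS S * GZZ Q α * XS S
      = GZZ Q α * (XS S * GZZ Q α * XS S) := by
    simp only [mul_assoc]
  rw [hassoc, GZZ_diag Q, GZZ_diag (Q \ S), GZZ_diag S, XS_conj,
    Matrix.diagonal_mul_diagonal, Matrix.diagonal_mul_diagonal]
  refine congrArg Matrix.diagonal (funext fun x => ?_)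
  show (∏ p ∈ (Q ×ˢ Q).filter fun p => p.1 < p.2,
        Complex.exp (-Complex.I * ((α : ℂ) / 2)
          * (-1 : ℂ) ^ (bitv (x p.1) + bitv (x p.2)))) *
      (∏ p ∈ (Q ×ˢ Q).filter fun p => p.1 < p.2,
        Complex.exp (-Complex.I * ((α : ℂ) / 2)
          * (-1 : ℂ) ^ (bitv (flipS S x p.1) + bitv (flipS S x p.2))))
    = (∏ p ∈ ((Q \ S) ×ˢ (Q \ S)).filter fun p => p.1 < p.2,
        Complex.exp (-Complex.I * (((2 * α : ℝ) : ℂ) / 2)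
          * (-1 : ℂ) ^ (bitv (x p.1) + bitv (x p.2)))) *
      ∏ p ∈ (S ×ˢ S).filter fun p => p.1 < p.2,
        Complex.exp (-Complex.I * (((2 * α : ℝ) : ℂ) / 2)
          * (-1 : ℂ) ^ (bitv (x p.1) + bitv (x p.2)))
  rw [← Finset.prod_mul_distrib]
  have key : ∀ p ∈ (Q ×ˢ Q).filter fun p => p.1 < p.2,
      Complex.exp (-Complex.I * ((α : ℂ) / 2) * (-1 : ℂ) ^ (bitv (x p.1) + bitv (x p.2))) *
        Complex.exp (-Complex.I * ((α : ℂ) / 2)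
          * (-1 : ℂ) ^ (bitv (flipS S x p.1) + bitv (flipS S x p.2)))
        = if (p.1 ∈ S) ↔ (p.2 ∈ S) then
            Complex.exp (-Complex.I * (((2 * α : ℝ) : ℂ) / 2)
              * (-1 : ℂ) ^ (bitv (x p.1) + bitv (x p.2)))
          else 1 := by
    intro p _
    by_cases h1 : p.1 ∈ S <;> by_cases h2 : p.2 ∈ S
    · rw [if_pos (by tauto)]
      simp only [flipS, h1, h2, if_true, neg_one_flip_both]
      exact e_same α _
    · rw [if_neg (by tauto)]
      simp only [flipS, h1, h2, if_true, if_false, neg_one_flip_left]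
      exact e_opp α _
    · rw [if_neg (by tauto)]
      simp only [flipS, h1, h2, if_true, if_false, neg_one_flip_right]
      exact e_opp α _
    · rw [if_pos (by tauto)]
      simp only [flipS, h1, h2, if_false]
      exact e_same α _
  rw [Finset.prod_congr rfl key, ← Finset.prod_filter]
  have hsplit : (((Q ×ˢ Q).filter fun p => p.1 < p.2).filter
        fun p => (p.1 ∈ S) ↔ (p.2 ∈ S))
      = (((Q \ S) ×ˢ (Q \ S)).filter fun p => p.1 < p.2)
        ∪ ((S ×ˢ S).filter fun p => p.1 < p.2) := by
    ext p
    have hQ1 : p.1 ∈ S → p.1 ∈ Q := fun h => hSQ h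
    have hQ2 : p.2 ∈ S → p.2 ∈ Q := fun h => hSQ h
    simp only [Finset.mem_filter, Finset.mem_product, Finset.mem_sdiff, Finset.mem_union]
    by_cases hi : p.1 ∈ S <;> by_cases hj : p.2 ∈ S <;>
      simp [hi, hj] <;> tauto
  have hdisj : Disjoint (((Q \ S) ×ˢ (Q \ S)).filter fun p => p.1 < p.2)
      ((S ×ˢ S).filter fun p => p.1 < p.2) := by
    rw [Finset.disjoint_left]
    rintro p h1 h2
    simp only [Finset.mem_filter, Finset.mem_product, Finset.mem_sdiff] at h1 h2
    exact h1.1.1.2 h2.1.1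
  rw [hsplit, Finset.prod_union hdisj]
end
end

section
/- Let n ≥ 1, S ⊆ Fin n with t ∈ S, and α real. Let F = ∏_{i ∈ S∖{t}} CNOT_{i,t} (these permutation matrices pairwise commute, so the product is well defined, and F is an involution). Then F · D_t(α) · F = P_S(α), where D_t(α) is the diagonal matrix with (x,x)-entry exp(-i·(α/2)·(-1)^{x_t}) and P_S(α) is the diagonal matrix with (x,x)-entry exp(-i·(α/2)·(-1)^{Σ_{i∈S} x_i}). (Figure 1: a fan-in ladder of CNOTs conjugating a single-qubit Z-phase realizes the phase gadget on S.) -/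
open Matrix

noncomputable section

/-- The single-qubit Z-phase gate `D_t(α)` on qubit `t`. -/
def Dgate {n : ℕ} (t : Fin n) (α : ℝ) : NQMatrix n :=
  Matrix.diagonal fun x => Complex.exp (-Complex.I * (α / 2) * (-1 : ℂ) ^ (bitv (x t)))

/-- The phase gadget `P_S(α)` on the subset `S`. -/
def PhaseGadget {n : ℕ} (S : Finset (Fin n)) (α : ℝ) : NQMatrix n :=
  Matrix.diagonal fun x =>
    Complex.exp (-Complex.I * (α / 2) * (-1 : ℂ) ^ (∑ i ∈ S, bitv (x i)))

/-- The fan-in gate: the product of the (pairwise commuting) gates `CNOT_{i,t}`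
over all `i ∈ S \ {t}`. -/
def fanIn {n : ℕ} (S : Finset (Fin n)) (t : Fin n) : NQMatrix n :=
  (((S.erase t).sort (· ≤ ·)).map fun c => CNOT c t).prod


namespace FanInAux

variable {n : ℕ}

/-- Parity (as a Bool) of the bits of `x` at positions in the list `L`. -/
def par (L : List (Fin n)) (x : Fin n → Bool) : Bool := (L.map x).foldr xor false

lemma par_cons (c : Fin n) (L : List (Fin n)) (x : Fin n → Bool) :
    par (c :: L) x = xor (x c) (par L x) := rfl

lemma par_congr {L : List (Fin n)} {x y : Fin n → Bool}
    (h : ∀ c ∈ L, x c = y c) : par L x = par L y := by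
  unfold par
  rw [List.map_congr_left h]

lemma prodCNOT (t : Fin n) (L : List (Fin n)) (hL : ∀ c ∈ L, c ≠ t) :
    ((L.map fun c => CNOT c t).prod : NQMatrix n) =
      Matrix.of fun x y =>
        if y = Function.update x t (xor (x t) (par L x)) then 1 else 0 := by
  induction L with
  | nil =>
    ext x y
    simp [par, Matrix.one_apply, eq_comm]
  | cons c L ih =>
    have hc : c ≠ t := hL c (by simp)
    have hL' : ∀ c ∈ L, c ≠ t := fun d hd => hL d (by simp [hd])
    ext x y
    set x' : Fin n → Bool := Function.update x t (xor (x t) (x c)) with hx'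
    have hpar : par L x' = par L x := by
      refine par_congr fun d hd => ?_
      simp [hx', Function.update_of_ne (hL' d hd)]
    have hx't : x' t = xor (x t) (x c) := by simp [hx']
    simp only [List.map_cons, List.prod_cons, Matrix.mul_apply, ih hL']
    simp only [CNOT, Matrix.of_apply]
    rw [Finset.sum_eq_single x']
    · rw [if_pos rfl, one_mul, hpar, hx't, hx', Function.update_idem, par_cons,
        Bool.xor_assoc]
    · intro b _ hb
      rw [if_neg hb, zero_mul]
    · intro h; exact absurd (Finset.mem_univ x') h

lemma neg_one_pow_xor (a b : Bool) :
    ((-1 : ℂ) ^ bitv (xor a b)) = (-1 : ℂ) ^ bitv a * (-1 : ℂ) ^ bitv b := by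
  cases a <;> cases b <;> norm_num [bitv]

lemma sign_par (L : List (Fin n)) (x : Fin n → Bool) :
    ((-1 : ℂ) ^ bitv (par L x)) = (-1 : ℂ) ^ ((L.map fun c => bitv (x c)).sum) := by
  induction L with
  | nil => simp [par, bitv]
  | cons c L ih =>
    rw [par_cons, neg_one_pow_xor, ih, List.map_cons, List.sum_cons, pow_add]

end FanInAux

/-- Figure 1: a fan-in ladder of CNOTs conjugating a single-qubit Z-phase on the
target `t ∈ S` realizes the phase gadget on `S`. -/
theorem fan_in_conj_realizes_phase_gadget (n : ℕ) (hn : 1 ≤ n) (S : Finset (Fin n))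
    (t : Fin n) (ht : t ∈ S) (α : ℝ) :
    fanIn S t * Dgate t α * fanIn S t = PhaseGadget S α := by
  classical
  set L := (S.erase t).sort (· ≤ ·) with hLdef
  have hL : ∀ c ∈ L, c ≠ t := fun c hc =>
    Finset.ne_of_mem_erase (((S.erase t).mem_sort _).mp hc)
  have hF : fanIn S t = Matrix.of fun x y =>
      if y = Function.update x t (xor (x t) (FanInAux.par L x)) then 1 else 0 :=
    FanInAux.prodCNOT t L hL
  set f : (Fin n → Bool) → (Fin n → Bool) :=
    fun x => Function.update x t (xor (x t) (FanInAux.par L x)) with hf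
  have hpf : ∀ x, FanInAux.par L (f x) = FanInAux.par L x := fun x =>
    FanInAux.par_congr fun c hc => Function.update_of_ne (hL c hc) _ _
  have hft : ∀ x, f x t = xor (x t) (FanInAux.par L x) := fun x =>
    Function.update_self _ _ _
  have hff : ∀ x, f (f x) = x := by
    intro x
    show Function.update (f x) t (xor (f x t) (FanInAux.par L (f x))) = x
    rw [hpf, hft, hf]
    simp only [Function.update_idem, Bool.xor_assoc, Bool.xor_self, Bool.xor_false,
      Function.update_eq_self]
  ext x y
  rw [Matrix.mul_assoc, Matrix.mul_apply, Finset.sum_eq_single (f x)]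
  · rw [hF, Matrix.of_apply, if_pos rfl, one_mul, Dgate, Matrix.diagonal_mul,
      Matrix.of_apply]
    show _ * (if y = f (f x) then (1:ℂ) else 0) = _
    rw [hff, PhaseGadget, Matrix.diagonal_apply]
    by_cases hxy : y = x
    · subst hxy
      rw [if_pos rfl, if_pos rfl, mul_one]
      congr 1
      rw [hft, FanInAux.neg_one_pow_xor, FanInAux.sign_par]
      have hls : ((L.map fun c => bitv (y c)).sum) = ∑ i ∈ S.erase t, bitv (y i) := by
        rw [hLdef]
        rw [List.Perm.sum_eq (List.Perm.map _ (Finset.sort_perm_toList _ _))]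
        exact Finset.sum_map_toList _ _
      rw [hls, ← pow_add, Finset.add_sum_erase S (fun i => bitv (y i)) ht]
    · rw [if_neg hxy, if_neg (fun h => hxy h.symm), mul_zero]
  · intro b _ hb
    rw [hF, Matrix.of_apply, if_neg hb, zero_mul]
  · intro h; exact absurd (Finset.mem_univ _) h
end
end

section
/- Let n ≥ 1, S ⊆ Fin n with t ∈ S. Then H_t · GCZ_S · H_t = (∏_{unordered pairs {i,j} ⊆ S∖{t}, i≠j} CZ_{ij}) · (∏_{i ∈ S∖{t}} CNOT_{i,t}), where H_t is the n-fold Kronecker product with the Hadamard matrix at position t and identity elsewhere. (Conjugating a global CZ gate on S by a Hadamard on one qubit t produces a fan-in of CNOTs into t together with residual CZ gates among the other qubits of S.) -/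
open Matrix

noncomputable section

namespace AuxHCZ

variable {n : ℕ}

lemma one_apply_bIdx (a b : Bool) :
    (1 : Matrix (Fin 2) (Fin 2) ℂ) (bIdx a) (bIdx b) = if a = b then 1 else 0 := by
  cases a <;> cases b <;> simp [bIdx, Matrix.one_apply]

lemma gate1_apply (A : Matrix (Fin 2) (Fin 2) ℂ) (t : Fin n) (x y : Fin n → Bool) :
    gate1 A t x y =
      A (bIdx (x t)) (bIdx (y t)) * (if ∀ j, j ≠ t → x j = y j then 1 else 0) := by
  unfold gate1 kron
  rw [Matrix.of_apply, ← Finset.mul_prod_erase _ _ (Finset.mem_univ t)]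
  simp only [if_pos rfl]
  congr 1
  by_cases hc : ∀ j, j ≠ t → x j = y j
  · rw [if_pos hc]
    apply Finset.prod_eq_one
    intro j hj
    rw [Finset.mem_erase] at hj
    rw [if_neg hj.1, one_apply_bIdx, if_pos (hc j hj.1)]
  · rw [if_neg hc]
    push_neg at hc
    obtain ⟨j, hjt, hxy⟩ := hc
    refine Finset.prod_eq_zero (Finset.mem_erase.mpr ⟨hjt, Finset.mem_univ j⟩) ?_
    rw [if_neg hjt, one_apply_bIdx, if_neg hxy]

lemma HMat_apply (a b : Bool) :
    HMat (bIdx a) (bIdx b) = ((Real.sqrt 2)⁻¹ : ℝ) * (-1 : ℂ) ^ (bitv a * bitv b) := by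
  cases a <;> cases b <;>
    simp [HMat, bIdx, bitv, Matrix.smul_apply, Complex.real_smul]

/-- exponent of the global CZ gate -/
def Efun (S : Finset (Fin n)) (x : Fin n → Bool) : ℕ :=
  ∑ p ∈ (S ×ˢ S).filter fun p => p.1 < p.2, bitv (x p.1) * bitv (x p.2)

lemma GCZ_eq_diagonal (S : Finset (Fin n)) :
    GCZ S = Matrix.diagonal fun x => (-1 : ℂ) ^ Efun S x := by
  have h := Finset.map_noncommProd ((S ×ˢ S).filter fun p => p.1 < p.2)
      (fun p : Fin n × Fin n => (fun x : Fin n → Bool =>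
        (-1 : ℂ) ^ (bitv (x p.1) * bitv (x p.2))))
      (fun _ _ _ _ _ => mul_comm _ _)
      (Matrix.diagonalRingHom (Fin n → Bool) ℂ)
  have hg : GCZ S = ((S ×ˢ S).filter fun p => p.1 < p.2).noncommProd
      (fun p => (Matrix.diagonalRingHom (Fin n → Bool) ℂ)
        (fun x : Fin n → Bool => (-1 : ℂ) ^ (bitv (x p.1) * bitv (x p.2))))
      (fun _ _ _ _ _ => by
        exact Commute.map (mul_comm _ _) (Matrix.diagonalRingHom (Fin n → Bool) ℂ)) := by
    rfl
  rw [hg, ← h, Finset.noncommProd_eq_prod]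
  show Matrix.diagonal _ = _
  refine congrArg Matrix.diagonal (funext fun x => ?_)
  rw [Finset.prod_apply, Efun, Finset.prod_pow_eq_pow_sum]

lemma Efun_double (S : Finset (Fin n)) (x : Fin n → Bool) :
    Efun S x = ∑ i ∈ S, ∑ j ∈ S,
      (if i < j then bitv (x i) * bitv (x j) else 0) := by
  rw [Efun, Finset.sum_filter, Finset.sum_product]

lemma Efun_insert (S' : Finset (Fin n)) (t : Fin n) (ht : t ∉ S') (x : Fin n → Bool) :
    Efun (insert t S') x = Efun S' x + bitv (x t) * ∑ i ∈ S', bitv (x i) := by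
  rw [Efun_double, Efun_double]
  rw [Finset.sum_insert ht]
  have h1 : ∑ j ∈ insert t S', (if t < j then bitv (x t) * bitv (x j) else 0) =
      ∑ j ∈ S', (if t < j then bitv (x t) * bitv (x j) else 0) := by
    rw [Finset.sum_insert ht, if_neg (lt_irrefl t), zero_add]
  rw [h1]
  have h2 : ∀ i ∈ S', ∑ j ∈ insert t S', (if i < j then bitv (x i) * bitv (x j) else 0)
      = (if i < t then bitv (x i) * bitv (x t) else 0)
        + ∑ j ∈ S', (if i < j then bitv (x i) * bitv (x j) else 0) := by
    intro i _
    rw [Finset.sum_insert ht]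
  rw [Finset.sum_congr rfl h2, Finset.sum_add_distrib, Finset.mul_sum]
  have h3 : ∑ j ∈ S', (if t < j then bitv (x t) * bitv (x j) else 0)
      + ∑ i ∈ S', (if i < t then bitv (x i) * bitv (x t) else 0)
      = ∑ i ∈ S', bitv (x t) * bitv (x i) := by
    rw [← Finset.sum_add_distrib]
    apply Finset.sum_congr rfl
    intro i hi
    have hit : i ≠ t := fun h => ht (h ▸ hi)
    rcases lt_or_gt_of_ne hit with h | h
    · rw [if_neg (asymm h), if_pos h, zero_add, mul_comm]
    · rw [if_pos h, if_neg (asymm h), add_zero]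
  omega

lemma Efun_update (S' : Finset (Fin n)) (t : Fin n) (ht : t ∉ S')
    (x : Fin n → Bool) (b : Bool) :
    Efun S' (Function.update x t b) = Efun S' x := by
  unfold Efun
  apply Finset.sum_congr rfl
  intro p hp
  rw [Finset.mem_filter, Finset.mem_product] at hp
  rw [Function.update_of_ne (fun h : p.1 = t => ht (h ▸ hp.1.1)),
      Function.update_of_ne (fun h : p.2 = t => ht (h ▸ hp.1.2))]

/-- parity of the bits of `x` over a list -/
def parb (x : Fin n → Bool) : List (Fin n) → Bool
  | [] => false
  | c :: l => xor (x c) (parb x l)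

lemma parb_congr (x x' : Fin n → Bool) (l : List (Fin n))
    (h : ∀ c ∈ l, x c = x' c) : parb x l = parb x' l := by
  induction l with
  | nil => rfl
  | cons c l ih =>
    simp only [parb, h c (List.mem_cons_self),
      ih (fun d hd => h d (List.mem_cons_of_mem c hd))]

lemma neg_one_pow_bitv_xor (a b : Bool) :
    ((-1 : ℂ)) ^ bitv (xor a b) = (-1) ^ (bitv a + bitv b) := by
  cases a <;> cases b <;> norm_num [bitv]

lemma neg_one_pow_parb (x : Fin n → Bool) (l : List (Fin n)) :
    ((-1 : ℂ)) ^ bitv (parb x l) = (-1) ^ (l.map fun c => bitv (x c)).sum := by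
  induction l with
  | nil => rfl
  | cons c l ih =>
    rw [show parb x (c :: l) = xor (x c) (parb x l) from rfl,
      neg_one_pow_bitv_xor, pow_add, ih, List.map_cons, List.sum_cons, pow_add]

lemma cnot_list_prod (t : Fin n) (l : List (Fin n)) (hl : ∀ c ∈ l, c ≠ t) :
    (l.map fun c => CNOT c t).prod =
      Matrix.of fun x y =>
        if y = Function.update x t (xor (x t) (parb x l)) then 1 else 0 := by
  induction l with
  | nil =>
    ext x y
    simp only [List.map_nil, List.prod_nil, Matrix.of_apply, parb, Bool.xor_false,
      Function.update_eq_self, Matrix.one_apply]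
    exact if_congr eq_comm rfl rfl
  | cons c l ih =>
    have hc : c ≠ t := hl c (List.mem_cons_self)
    have hl' : ∀ d ∈ l, d ≠ t := fun d hd => hl d (List.mem_cons_of_mem c hd)
    rw [List.map_cons, List.prod_cons, ih hl']
    ext x y
    rw [Matrix.mul_apply]
    set z0 := Function.update x t (xor (x t) (x c)) with hz0
    have hsum : ∀ z : Fin n → Bool, CNOT c t x z *
        Matrix.of (fun x y => if y = Function.update x t (xor (x t) (parb x l)) then
          (1:ℂ) else 0) z y
        = if z = z0 then (Matrix.of (fun x y =>
            if y = Function.update x t (xor (x t) (parb x l)) then (1:ℂ) else 0)) z y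
          else 0 := by
      intro z
      by_cases h : z = z0
      · rw [if_pos h, CNOT, Matrix.of_apply, if_pos h, one_mul]
      · rw [if_neg h, CNOT, Matrix.of_apply, if_neg h, zero_mul]
    rw [Finset.sum_congr rfl (fun z _ => hsum z), Finset.sum_ite_eq' Finset.univ z0,
      if_pos (Finset.mem_univ _)]
    simp only [Matrix.of_apply]
    have e1 : z0 t = xor (x t) (x c) := Function.update_self _ _ _
    have e2 : parb z0 l = parb x l := by
      apply parb_congr
      intro d hd
      exact Function.update_of_ne (hl' d hd) _ _
    rw [e1, e2, Function.update_idem]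
    have e3 : xor (xor (x t) (x c)) (parb x l) = xor (x t) (parb x (c :: l)) := by
      show _ = xor (x t) (xor (x c) (parb x l))
      rw [Bool.xor_assoc]
    rw [e3]

lemma fanIn_eq (S : Finset (Fin n)) (t : Fin n) :
    fanIn S t = Matrix.of fun x y =>
      if y = Function.update x t (xor (x t) (parb x ((S.erase t).sort (· ≤ ·))))
        then 1 else 0 := by
  apply cnot_list_prod
  intro c hc
  rw [Finset.mem_sort] at hc
  exact Finset.ne_of_mem_erase hc

lemma neg_one_pow_parb_sort (S' : Finset (Fin n)) (x : Fin n → Bool) :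
    ((-1 : ℂ)) ^ bitv (parb x (S'.sort (· ≤ ·))) = (-1) ^ ∑ i ∈ S', bitv (x i) := by
  rw [neg_one_pow_parb]
  congr 1
  rw [← Finset.sum_map_toList]
  exact ((Finset.sort_perm_toList S' (· ≤ ·)).map _).sum_eq

lemma key_scalar (a c P : Bool) (m : ℕ) (hP : ((-1 : ℂ)) ^ bitv P = (-1) ^ m) :
    (1 : ℂ) + (-1) ^ (bitv a + m + bitv c) = if c = xor a P then 2 else 0 := by
  have : ((-1 : ℂ)) ^ (bitv a + m + bitv c)
      = (-1) ^ bitv a * (-1) ^ bitv P * (-1) ^ bitv c := by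
    rw [pow_add, pow_add, hP]
  rw [this]
  cases a <;> cases c <;> cases P <;> norm_num [bitv]

end AuxHCZ

/-- Conjugating a global CZ gate on `S` by a Hadamard on one qubit `t ∈ S`
produces a fan-in of CNOTs into `t` together with residual CZ gates among the
other qubits of `S`. -/
theorem hadamard_conj_gcz_eq_cz_and_fan_in (n : ℕ) (hn : 1 ≤ n) (S : Finset (Fin n))
    (t : Fin n) (ht : t ∈ S) :
    gate1 HMat t * GCZ S * gate1 HMat t = GCZ (S.erase t) * fanIn S t := by
  classical
  set S' := S.erase t with hS'
  have htS' : t ∉ S' := Finset.notMem_erase t S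
  have hins : insert t S' = S := Finset.insert_erase ht
  set s : ℂ := (((Real.sqrt 2)⁻¹ : ℝ) : ℂ) with hs
  rw [AuxHCZ.GCZ_eq_diagonal S, AuxHCZ.GCZ_eq_diagonal S', AuxHCZ.fanIn_eq]
  ext x y
  set m : ℕ := ∑ i ∈ S', bitv (x i) with hm
  set P : Bool := AuxHCZ.parb x (S'.sort (· ≤ ·)) with hP
  rw [Matrix.mul_apply]
  simp only [Matrix.mul_diagonal, Matrix.diagonal_mul, Matrix.of_apply]
  by_cases hxy : ∀ j, j ≠ t → x j = y j
  · -- y agrees with x off t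
    set u0 := Function.update x t false with hu0
    set u1 := Function.update x t true with hu1
    have hne : u0 ≠ u1 := by
      intro h
      have := congrFun h t
      rw [hu0, hu1, Function.update_self, Function.update_self] at this
      exact Bool.false_ne_true this
    have hzero : ∀ z ∈ Finset.univ, z ∉ ({u0, u1} : Finset (Fin n → Bool)) →
        gate1 HMat t x z * ((-1 : ℂ) ^ AuxHCZ.Efun S z) * gate1 HMat t z y = 0 := by
      intro z _ hz
      simp only [Finset.mem_insert, Finset.mem_singleton] at hz
      push_neg at hz
      have hnc : ¬ ∀ j, j ≠ t → x j = z j := by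
        intro hall
        have hz' : z = Function.update x t (z t) := by
          funext j
          by_cases hj : j = t
          · subst hj; rw [Function.update_self]
          · rw [Function.update_of_ne hj]; exact (hall j hj).symm
        cases hb : z t
        · exact hz.1 (by rw [hz', hb])
        · exact hz.2 (by rw [hz', hb])
      rw [AuxHCZ.gate1_apply, if_neg hnc, mul_zero, zero_mul, zero_mul]
    rw [← Finset.sum_subset (Finset.subset_univ {u0, u1}) hzero, Finset.sum_pair hne]
    have hterm : ∀ b : Bool,
        gate1 HMat t x (Function.update x t b) *
            ((-1 : ℂ) ^ AuxHCZ.Efun S (Function.update x t b)) *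
            gate1 HMat t (Function.update x t b) y
          = (s * (-1) ^ (bitv (x t) * bitv b)) * ((-1) ^ (AuxHCZ.Efun S' x + bitv b * m))
              * (s * (-1) ^ (bitv b * bitv (y t))) := by
      intro b
      have h1 : gate1 HMat t x (Function.update x t b)
          = s * (-1) ^ (bitv (x t) * bitv b) := by
        rw [AuxHCZ.gate1_apply, if_pos, mul_one, Function.update_self, AuxHCZ.HMat_apply]
        intro j hj
        rw [Function.update_of_ne hj]
      have h2 : AuxHCZ.Efun S (Function.update x t b)
          = AuxHCZ.Efun S' x + bitv b * m := by
        rw [← hins, AuxHCZ.Efun_insert S' t htS', AuxHCZ.Efun_update S' t htS',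
          Function.update_self]
        congr 1
        rw [hm]
        refine congrArg (bitv b * ·) (Finset.sum_congr rfl fun i hi => ?_)
        rw [Function.update_of_ne (fun h : i = t => htS' (h ▸ hi))]
      have h3 : gate1 HMat t (Function.update x t b) y
          = s * (-1) ^ (bitv b * bitv (y t)) := by
        rw [AuxHCZ.gate1_apply, if_pos, mul_one, Function.update_self, AuxHCZ.HMat_apply]
        intro j hj
        rw [Function.update_of_ne hj]
        exact hxy j hj
      rw [h1, h2, h3]
    rw [hterm false, hterm true]
    have hkey : (1 : ℂ) + (-1) ^ (bitv (x t) + m + bitv (y t))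
        = if y t = xor (x t) P then 2 else 0 :=
      AuxHCZ.key_scalar (x t) (y t) P m (AuxHCZ.neg_one_pow_parb_sort S' x)
    have hyu : (y = Function.update x t (xor (x t) P)) ↔ (y t = xor (x t) P) := by
      constructor
      · intro h; rw [h, Function.update_self]
      · intro h
        funext j
        by_cases hj : j = t
        · subst hj; rw [Function.update_self]; exact h
        · rw [Function.update_of_ne hj]; exact (hxy j hj).symm
    have hss : s * s * 2 = 1 := by
      rw [hs, ← Complex.ofReal_mul]
      have : (Real.sqrt 2)⁻¹ * (Real.sqrt 2)⁻¹ = (2 : ℝ)⁻¹ := by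
        rw [← mul_inv, Real.mul_self_sqrt (by norm_num : (0 : ℝ) ≤ 2)]
      rw [this]
      norm_num
    have hlhs : (s * (-1) ^ (bitv (x t) * bitv false)) *
          ((-1 : ℂ) ^ (AuxHCZ.Efun S' x + bitv false * m))
          * (s * (-1) ^ (bitv false * bitv (y t)))
        + (s * (-1) ^ (bitv (x t) * bitv true)) *
          ((-1) ^ (AuxHCZ.Efun S' x + bitv true * m))
          * (s * (-1) ^ (bitv true * bitv (y t)))
        = s * s * (-1) ^ AuxHCZ.Efun S' x *
            (1 + (-1) ^ (bitv (x t) + m + bitv (y t))) := by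
      have e0 : bitv false = 0 := rfl
      have e1 : bitv true = 1 := rfl
      rw [e0, e1]
      simp only [Nat.mul_zero, Nat.zero_mul, Nat.mul_one, Nat.one_mul, pow_zero,
        pow_add, Nat.add_zero]
      ring
    rw [hlhs, hkey]
    by_cases hcond : y t = xor (x t) P
    · rw [if_pos hcond, if_pos (hyu.mpr hcond), mul_one]
      calc s * s * (-1) ^ AuxHCZ.Efun S' x * 2
          = s * s * 2 * (-1) ^ AuxHCZ.Efun S' x := by ring
        _ = (-1) ^ AuxHCZ.Efun S' x := by rw [hss, one_mul]
    · rw [if_neg hcond, if_neg (fun h => hcond (hyu.mp h)), mul_zero, mul_zero]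
  · -- x and y differ off t : both sides vanish
    push_neg at hxy
    obtain ⟨j, hjt, hj⟩ := hxy
    have hL : ∀ z : Fin n → Bool, gate1 HMat t x z * ((-1 : ℂ) ^ AuxHCZ.Efun S z) *
        gate1 HMat t z y = 0 := by
      intro z
      by_cases hz : x j = z j
      · have hnc : ¬ ∀ k, k ≠ t → z k = y k := fun h => hj (hz.trans (h j hjt))
        rw [AuxHCZ.gate1_apply HMat t z y, if_neg hnc, mul_zero, mul_zero]
      · have hnc : ¬ ∀ k, k ≠ t → x k = z k := fun h => hz (h j hjt)
        rw [AuxHCZ.gate1_apply HMat t x z, if_neg hnc, mul_zero, zero_mul, zero_mul]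
    rw [Finset.sum_congr rfl (fun z _ => hL z), Finset.sum_const_zero]
    rw [if_neg, mul_zero]
    intro hy
    exact hj ((congrFun hy j).trans (Function.update_of_ne hjt _ _)).symm
end
end

section
/- Let n ≥ 1, S ⊆ Fin n with t ∈ S, and α real. Then D_t(α) · H_t · GCZ_S · H_t = C · P_S(α), where C = (∏_{unordered pairs {i,j} ⊆ S∖{t}, i≠j} CZ_{ij}) · (∏_{i ∈ S∖{t}} CNOT_{i,t}). (Equation (7): the phase gadget P_S(α) can be synthesized up to a 'garbage' Clifford C using a single global CZ gate, a Hadamard pair on one qubit, and one single-qubit Z-phase gate.) -/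
open Matrix

noncomputable section

namespace PGaux

lemma bIdx_one (a b : Bool) :
    (1 : Matrix (Fin 2) (Fin 2) ℂ) (bIdx a) (bIdx b) = if a = b then 1 else 0 := by
  cases a <;> cases b <;> simp [bIdx, Matrix.one_apply]

lemma gate1_apply {n : ℕ} (A : Matrix (Fin 2) (Fin 2) ℂ) (t : Fin n) (x y : Fin n → Bool) :
    gate1 A t x y = if ∀ j, j ≠ t → x j = y j then A (bIdx (x t)) (bIdx (y t)) else 0 := by
  show (∏ i, (if i = t then A else 1) (bIdx (x i)) (bIdx (y i))) = _
  rw [← Finset.prod_erase_mul _ _ (Finset.mem_univ t), if_pos rfl]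
  rw [Finset.prod_congr rfl (fun j hj => by
    rw [if_neg (Finset.ne_of_mem_erase hj), bIdx_one]), Finset.prod_boole]
  by_cases h : ∀ j, j ≠ t → x j = y j
  · rw [if_pos (fun j hj => h j (Finset.ne_of_mem_erase hj)), if_pos h, one_mul]
  · rw [if_neg (fun hc => h fun j hj => hc j (Finset.mem_erase.mpr ⟨hj, Finset.mem_univ j⟩)),
      if_neg h, zero_mul]

lemma HMat_apply (a b : Bool) :
    HMat (bIdx a) (bIdx b) = (((Real.sqrt 2)⁻¹ : ℝ) : ℂ) * (-1) ^ (bitv a * bitv b) := by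
  cases a <;> cases b <;>
    simp [HMat, bIdx, bitv, Matrix.smul_apply, Complex.real_smul] <;> ring

lemma noncommProd_diagonal {ι : Type*} [DecidableEq ι] {m : Type*} [Fintype m] [DecidableEq m]
    (s : Finset ι) (d : ι → m → ℂ) :
    (s.noncommProd (fun i => Matrix.diagonal (d i)) (fun _ _ _ _ _ => diag_comm _ _))
      = Matrix.diagonal (fun x => ∏ i ∈ s, d i x) := by
  induction s using Finset.induction_on with
  | empty => simp; rfl
  | @insert a s ha ih =>
    refine (Finset.noncommProd_insert_of_notMem _ _ _ _ ha).trans ?_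
    rw [ih, Matrix.diagonal_mul_diagonal]
    exact congrArg Matrix.diagonal (funext fun x => by rw [Finset.prod_insert ha])

lemma GCZ_eq_diagonal {n : ℕ} (S : Finset (Fin n)) :
    GCZ S = Matrix.diagonal (fun x => ∏ p ∈ (S ×ˢ S).filter (fun p => p.1 < p.2),
      (-1 : ℂ) ^ (bitv (x p.1) * bitv (x p.2))) := by
  unfold GCZ CZgate
  exact noncommProd_diagonal _ _


lemma pairs_prod_split {n : ℕ} (S : Finset (Fin n)) (t : Fin n) (ht : t ∈ S)
    (f : Fin n → Fin n → ℂ) (hf : ∀ i j, f i j = f j i) :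
    (∏ p ∈ (S ×ˢ S).filter (fun p => p.1 < p.2), f p.1 p.2)
      = (∏ p ∈ ((S.erase t) ×ˢ (S.erase t)).filter (fun p => p.1 < p.2), f p.1 p.2)
        * ∏ i ∈ S.erase t, f i t := by
  classical
  rw [← Finset.prod_filter_mul_prod_filter_not ((S ×ˢ S).filter (fun p => p.1 < p.2))
      (fun p => p.1 ≠ t ∧ p.2 ≠ t)]
  congr 1
  · apply Finset.prod_congr _ (fun _ _ => rfl)
    ext p
    simp only [Finset.mem_filter, Finset.mem_product, Finset.mem_erase]
    tauto
  · rw [← Finset.prod_filter_mul_prod_filter_not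
        (Finset.filter (fun p => ¬(p.1 ≠ t ∧ p.2 ≠ t)) ((S ×ˢ S).filter (fun p => p.1 < p.2)))
        (fun p => p.1 = t)]
    have h1 : Finset.filter (fun p => p.1 = t)
        (Finset.filter (fun p => ¬(p.1 ≠ t ∧ p.2 ≠ t)) ((S ×ˢ S).filter (fun p => p.1 < p.2)))
        = (Finset.filter (fun i => t < i) (S.erase t)).image (fun i => (t, i)) := by
      ext p
      simp only [Finset.mem_filter, Finset.mem_product, Finset.mem_image, Finset.mem_erase]
      constructor
      · rintro ⟨⟨⟨⟨hp1, hp2⟩, hlt⟩, -⟩, hpt⟩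
        exact ⟨p.2, ⟨⟨(hpt ▸ hlt).ne', hp2⟩, hpt ▸ hlt⟩, by rw [← hpt]⟩
      · rintro ⟨i, ⟨⟨hne, hi⟩, hti⟩, rfl⟩
        exact ⟨⟨⟨⟨ht, hi⟩, hti⟩, by simp⟩, rfl⟩
    have h2 : Finset.filter (fun p => ¬ p.1 = t)
        (Finset.filter (fun p => ¬(p.1 ≠ t ∧ p.2 ≠ t)) ((S ×ˢ S).filter (fun p => p.1 < p.2)))
        = (Finset.filter (fun i => i < t) (S.erase t)).image (fun i => (i, t)) := by
      ext p
      simp only [Finset.mem_filter, Finset.mem_product, Finset.mem_image, Finset.mem_erase]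
      constructor
      · rintro ⟨⟨⟨⟨hp1, hp2⟩, hlt⟩, hor⟩, hpt⟩
        have hp2t : p.2 = t := by tauto
        exact ⟨p.1, ⟨⟨hpt, hp1⟩, hp2t ▸ hlt⟩, by rw [← hp2t]⟩
      · rintro ⟨i, ⟨⟨hne, hi⟩, hit⟩, rfl⟩
        exact ⟨⟨⟨⟨hi, ht⟩, hit⟩, by simp [hne]⟩, hne⟩
    rw [h1, h2, Finset.prod_image (fun a _ b _ h => ((Prod.mk.injEq _ _ _ _).mp h).2),
      Finset.prod_image (fun a _ b _ h => ((Prod.mk.injEq _ _ _ _).mp h).1)]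
    rw [Finset.prod_congr rfl (fun i _ => hf t i)]
    have hfilt : Finset.filter (fun i => i < t) (S.erase t)
        = Finset.filter (fun i => ¬ t < i) (S.erase t) := by
      ext i
      simp only [Finset.mem_filter, Finset.mem_erase]
      constructor
      · rintro ⟨⟨hne, hi⟩, hlt⟩
        exact ⟨⟨hne, hi⟩, not_lt.mpr hlt.le⟩
      · rintro ⟨⟨hne, hi⟩, hnlt⟩
        exact ⟨⟨hne, hi⟩, lt_of_le_of_ne (not_lt.mp hnlt) hne⟩
    rw [hfilt, Finset.prod_filter_mul_prod_filter_not]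

lemma cnot_list_prod {n : ℕ} (t : Fin n) (L : List (Fin n)) (hL : t ∉ L) :
    (L.map fun c => CNOT c t).prod =
      Matrix.of fun x y =>
        if y = Function.update x t (xor (x t) ((L.map x).foldr xor false)) then 1 else 0 := by
  induction L with
  | nil =>
    ext x y
    simp [Matrix.one_apply, eq_comm, Function.update_eq_self]
  | cons a L ih =>
    have htL : t ∉ L := fun h => hL (List.mem_cons_of_mem a h)
    rw [List.map_cons, List.prod_cons, ih htL]
    ext x y
    rw [Matrix.mul_apply]
    simp only [CNOT, Matrix.of_apply, ite_mul, one_mul, zero_mul]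
    rw [Finset.sum_ite_eq' Finset.univ (Function.update x t (xor (x t) (x a)))
        (fun z => if y = Function.update z t (xor (z t) ((L.map z).foldr xor false)) then 1 else 0),
      if_pos (Finset.mem_univ _)]
    have hmap : L.map (Function.update x t (xor (x t) (x a))) = L.map x :=
      List.map_congr_left fun c hc => Function.update_of_ne (fun h => htL (by subst h; exact hc)) _ _
    rw [hmap, Function.update_idem, Function.update_self, List.map_cons, List.foldr_cons,
      Bool.xor_assoc]

lemma fanIn_apply {n : ℕ} (S : Finset (Fin n)) (t : Fin n) :
    fanIn S t = Matrix.of fun x y =>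
      if y = Function.update x t
          (xor (x t) ((((S.erase t).sort (· ≤ ·)).map x).foldr xor false)) then 1 else 0 :=
  cnot_list_prod t _ (fun h => (Finset.mem_erase.mp ((Finset.mem_sort _).mp h)).1 rfl)

lemma neg_one_pow_bitv_xor (a b : Bool) :
    ((-1 : ℂ)) ^ (bitv (xor a b)) = (-1) ^ (bitv a) * (-1) ^ (bitv b) := by
  cases a <;> cases b <;> norm_num [bitv]

lemma neg_one_pow_foldr (L : List Bool) :
    ((-1 : ℂ)) ^ bitv (L.foldr xor false) = (-1) ^ (L.map bitv).sum := by
  induction L with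
  | nil => rfl
  | cons a L ih =>
    rw [List.foldr_cons, List.map_cons, List.sum_cons, pow_add, neg_one_pow_bitv_xor, ih]

lemma par_pow {n : ℕ} (S' : Finset (Fin n)) (x : Fin n → Bool) :
    ((-1 : ℂ)) ^ bitv (((S'.sort (· ≤ ·)).map x).foldr xor false)
      = (-1) ^ (∑ i ∈ S', bitv (x i)) := by
  rw [neg_one_pow_foldr]
  congr 1
  rw [List.map_map, ((Finset.sort_perm_toList (s := S') (r := (· ≤ ·))).map (bitv ∘ x)).sum_eq,
    Finset.sum_map_toList]
  rfl

lemma gate1_comm_diag {n : ℕ} (A : Matrix (Fin 2) (Fin 2) ℂ) (t : Fin n)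
    (g : (Fin n → Bool) → ℂ) (hg : ∀ x b, g (Function.update x t b) = g x) :
    gate1 A t * Matrix.diagonal g = Matrix.diagonal g * gate1 A t := by
  ext x y
  rw [Matrix.mul_diagonal, Matrix.diagonal_mul, gate1_apply]
  by_cases h : ∀ j, j ≠ t → x j = y j
  · have hy : y = Function.update x t (y t) := funext fun j => by
      by_cases hj : j = t
      · subst hj; rw [Function.update_self]
      · rw [Function.update_of_ne hj]; exact (h j hj).symm
    have hxy : g y = g x := by rw [hy, hg]
    rw [if_pos h, hxy, mul_comm]
  · rw [if_neg h, zero_mul, mul_zero]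


lemma bitv_false : bitv false = 0 := rfl
lemma bitv_true : bitv true = 1 := rfl

lemma scalar_key (r : ℂ) (hr : r * r = 1/2) (s : ℕ) (a c p : Bool)
    (hp : ((-1 : ℂ)) ^ (bitv p) = (-1) ^ s) :
    (r * (-1) ^ (bitv a * bitv false)) * ((-1 : ℂ) ^ (bitv false * s) * (r * (-1) ^ (bitv false * bitv c)))
      + (r * (-1) ^ (bitv a * bitv true)) * ((-1 : ℂ) ^ (bitv true * s) * (r * (-1) ^ (bitv true * bitv c)))
      = if c = xor a p then 1 else 0 := by
  cases a <;> cases c <;> cases p <;>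
    simp only [bitv_false, bitv_true, Bool.xor_false, Bool.xor_true, Bool.false_xor, Bool.true_xor,
      Bool.not_true, Bool.not_false, Nat.mul_zero, Nat.zero_mul, Nat.mul_one, Nat.one_mul,
      pow_zero, pow_one, reduceIte] at hp ⊢ <;>
    (try rw [← hp]) <;>
    (first
      | linear_combination 2 * hr
      | linear_combination (-2 : ℂ) * hr
      | norm_num)

lemma had_conj {n : ℕ} (t : Fin n) (s : (Fin n → Bool) → ℕ) (par : (Fin n → Bool) → Bool)
    (hs : ∀ x b, s (Function.update x t b) = s x)
    (hpar : ∀ x, ((-1 : ℂ)) ^ (bitv (par x)) = (-1) ^ (s x)) :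
    gate1 HMat t * Matrix.diagonal (fun x => (-1 : ℂ) ^ (bitv (x t) * s x)) * gate1 HMat t
      = Matrix.of fun x y => if y = Function.update x t (xor (x t) (par x)) then 1 else 0 := by
  have hr : (((Real.sqrt 2)⁻¹ : ℝ) : ℂ) * (((Real.sqrt 2)⁻¹ : ℝ) : ℂ) = 1/2 := by
    rw [← Complex.ofReal_mul, ← mul_inv, Real.mul_self_sqrt (by norm_num : (0:ℝ) ≤ 2)]
    norm_num
  ext x y
  rw [Matrix.mul_assoc, Matrix.mul_apply]
  rw [Finset.sum_congr rfl (fun z _ => by rw [Matrix.diagonal_mul] :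
    ∀ z ∈ Finset.univ, gate1 HMat t x z *
        (Matrix.diagonal (fun w => (-1 : ℂ) ^ (bitv (w t) * s w)) * gate1 HMat t) z y
      = gate1 HMat t x z * ((-1 : ℂ) ^ (bitv (z t) * s z) * gate1 HMat t z y))]
  have hne : Function.update x t false ≠ Function.update x t true := fun h => by
    have := congrFun h t
    rw [Function.update_self, Function.update_self] at this
    exact Bool.noConfusion this
  have hzero : ∀ z : Fin n → Bool, z ≠ Function.update x t false ∧ z ≠ Function.update x t true →
      gate1 HMat t x z * ((-1 : ℂ) ^ (bitv (z t) * s z) * gate1 HMat t z y) = 0 := by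
    rintro z ⟨hz0, hz1⟩
    rw [gate1_apply, if_neg, zero_mul]
    intro h
    have hz : z = Function.update x t (z t) := funext fun j => by
      by_cases hj : j = t
      · subst hj; rw [Function.update_self]
      · rw [Function.update_of_ne hj]; exact (h j hj).symm
    cases hb : z t
    · exact hz0 (by rw [hz, hb])
    · exact hz1 (by rw [hz, hb])
  rw [Fintype.sum_eq_add (Function.update x t false) (Function.update x t true) hne hzero]
  have e1 : ∀ b : Bool, gate1 HMat t x (Function.update x t b) = HMat (bIdx (x t)) (bIdx b) := by
    intro b
    rw [gate1_apply, if_pos (fun j hj => (Function.update_of_ne hj _ _).symm),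
      Function.update_self]
  have e2 : ∀ b : Bool, gate1 HMat t (Function.update x t b) y
      = if ∀ j, j ≠ t → x j = y j then HMat (bIdx b) (bIdx (y t)) else 0 := by
    intro b
    rw [gate1_apply, Function.update_self]
    exact if_congr (forall_congr' fun j => imp_congr_right fun hj => by
      rw [Function.update_of_ne hj]) rfl rfl
  simp only [e1, e2, Function.update_self, hs]
  by_cases hxy : ∀ j, j ≠ t → x j = y j
  · have hyu : (y = Function.update x t (xor (x t) (par x))) ↔ (y t = xor (x t) (par x)) := by
      constructor
      · intro h; rw [h, Function.update_self]
      · intro h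
        funext j
        by_cases hj : j = t
        · subst hj; rw [Function.update_self, h]
        · rw [Function.update_of_ne hj]; exact (hxy j hj).symm
    rw [Matrix.of_apply, if_pos hxy, if_pos hxy, if_congr hyu rfl rfl,
      HMat_apply, HMat_apply, HMat_apply, HMat_apply]
    exact scalar_key _ hr (s x) (x t) (y t) (par x) (hpar x)
  · have hyne : y ≠ Function.update x t (xor (x t) (par x)) := fun h =>
      hxy fun j hj => by rw [h, Function.update_of_ne hj]
    rw [Matrix.of_apply, if_neg hyne, if_neg hxy, if_neg hxy, mul_zero, mul_zero, mul_zero,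
      mul_zero, add_zero]

lemma phase_fan {n : ℕ} (S : Finset (Fin n)) (t : Fin n) (ht : t ∈ S) (α : ℝ)
    (par : (Fin n → Bool) → Bool)
    (hpar : ∀ x, ((-1 : ℂ)) ^ (bitv (par x)) = (-1) ^ (∑ i ∈ S.erase t, bitv (x i))) :
    Dgate t α * (Matrix.of fun x y =>
        if y = Function.update x t (xor (x t) (par x)) then 1 else 0)
      = (Matrix.of fun x y =>
        if y = Function.update x t (xor (x t) (par x)) then 1 else 0) * PhaseGadget S α := by
  ext x y
  simp only [Dgate, PhaseGadget, Matrix.diagonal_mul, Matrix.mul_diagonal, Matrix.of_apply]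
  by_cases h : y = Function.update x t (xor (x t) (par x))
  · rw [if_pos h, mul_one, one_mul]
    have hsum : ∑ i ∈ S, bitv (y i) = bitv (y t) + ∑ i ∈ S.erase t, bitv (y i) :=
      (Finset.add_sum_erase S _ ht).symm
    have herase : ∑ i ∈ S.erase t, bitv (y i) = ∑ i ∈ S.erase t, bitv (x i) :=
      Finset.sum_congr rfl fun i hi => by
        rw [h, Function.update_of_ne (Finset.mem_erase.mp hi).1]
    have hyt : y t = xor (x t) (par x) := by rw [h, Function.update_self]
    have hkey : ((-1 : ℂ)) ^ (bitv (x t)) = (-1) ^ (∑ i ∈ S, bitv (y i)) := by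
      rw [hsum, herase, hyt, pow_add, neg_one_pow_bitv_xor, hpar x, mul_assoc, ← pow_add,
        Even.neg_one_pow ⟨_, rfl⟩, mul_one]
    rw [hkey]
  · rw [if_neg h, mul_zero, zero_mul]

lemma assemble {n : ℕ} (Dg G F Cz H P : NQMatrix n)
    (h1 : H * G = G * H) (h2 : Dg * G = G * Dg)
    (h3 : H * Cz * H = F) (h4 : Dg * F = F * P) :
    Dg * (H * (G * Cz) * H) = (G * F) * P := by
  calc Dg * (H * (G * Cz) * H) = Dg * (G * (H * Cz * H)) := by
        rw [← Matrix.mul_assoc H G Cz, h1, Matrix.mul_assoc G H Cz,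
          Matrix.mul_assoc G (H * Cz) H]
    _ = G * (Dg * F) := by rw [h3, ← Matrix.mul_assoc, h2, Matrix.mul_assoc]
    _ = (G * F) * P := by rw [h4, Matrix.mul_assoc]

end PGaux

/-- Equation (7): the phase gadget `P_S(α)` can be synthesized, up to a `garbage`
Clifford `C`, using a single global CZ gate, a Hadamard pair on one qubit `t ∈ S`,
and one single-qubit Z-phase gate. -/
theorem phase_gadget_from_single_gcz (n : ℕ) (hn : 1 ≤ n) (S : Finset (Fin n))
    (t : Fin n) (ht : t ∈ S) (α : ℝ) :
    Dgate t α * (gate1 HMat t * GCZ S * gate1 HMat t)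
      = (GCZ (S.erase t) * fanIn S t) * PhaseGadget S α := by
  classical
  have hpar : ∀ x : Fin n → Bool,
      ((-1 : ℂ)) ^ (bitv ((((S.erase t).sort (· ≤ ·)).map x).foldr xor false))
        = (-1) ^ (∑ i ∈ S.erase t, bitv (x i)) := fun x => PGaux.par_pow _ x
  have hsins : ∀ (x : Fin n → Bool) (b : Bool),
      (∑ i ∈ S.erase t, bitv (Function.update x t b i)) = ∑ i ∈ S.erase t, bitv (x i) :=
    fun x b => Finset.sum_congr rfl fun i hi => by
      rw [Function.update_of_ne (Finset.mem_erase.mp hi).1]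
  have hH := PGaux.had_conj t (fun x => ∑ i ∈ S.erase t, bitv (x i))
      (fun x => (((S.erase t).sort (· ≤ ·)).map x).foldr xor false) hsins hpar
  have hDF := PGaux.phase_fan S t ht α
      (fun x => (((S.erase t).sort (· ≤ ·)).map x).foldr xor false) hpar
  have hcomm1 : gate1 HMat t * Matrix.diagonal (fun z : Fin n → Bool =>
        ∏ p ∈ ((S.erase t) ×ˢ (S.erase t)).filter (fun p => p.1 < p.2),
          (-1 : ℂ) ^ (bitv (z p.1) * bitv (z p.2)))
      = Matrix.diagonal (fun z : Fin n → Bool =>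
        ∏ p ∈ ((S.erase t) ×ˢ (S.erase t)).filter (fun p => p.1 < p.2),
          (-1 : ℂ) ^ (bitv (z p.1) * bitv (z p.2))) * gate1 HMat t :=
    PGaux.gate1_comm_diag HMat t _ (fun x b => by
      refine Finset.prod_congr rfl fun p hp => ?_
      simp only [Finset.mem_filter, Finset.mem_product, Finset.mem_erase] at hp
      rw [Function.update_of_ne hp.1.1.1, Function.update_of_ne hp.1.2.1])
  have hcomm2 := (diag_comm
    (fun x : Fin n → Bool => Complex.exp (-Complex.I * (α / 2) * (-1 : ℂ) ^ (bitv (x t))))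
    (fun z : Fin n → Bool => ∏ p ∈ ((S.erase t) ×ˢ (S.erase t)).filter (fun p => p.1 < p.2),
      (-1 : ℂ) ^ (bitv (z p.1) * bitv (z p.2)))).eq
  have hsplit : GCZ S =
      Matrix.diagonal (fun z : Fin n → Bool =>
        ∏ p ∈ ((S.erase t) ×ˢ (S.erase t)).filter (fun p => p.1 < p.2),
          (-1 : ℂ) ^ (bitv (z p.1) * bitv (z p.2)))
      * Matrix.diagonal (fun x : Fin n → Bool =>
          (-1 : ℂ) ^ (bitv (x t) * ∑ i ∈ S.erase t, bitv (x i))) := by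
    rw [PGaux.GCZ_eq_diagonal, Matrix.diagonal_mul_diagonal]
    refine congrArg Matrix.diagonal (funext fun x => ?_)
    rw [PGaux.pairs_prod_split S t ht (fun i j => (-1 : ℂ) ^ (bitv (x i) * bitv (x j)))
      (fun i j => by
        show ((-1 : ℂ)) ^ (bitv (x i) * bitv (x j)) = (-1) ^ (bitv (x j) * bitv (x i))
        rw [Nat.mul_comm])]
    congr 1
    rw [Finset.mul_sum, ← Finset.prod_pow_eq_pow_sum]
    exact Finset.prod_congr rfl fun i _ => by rw [Nat.mul_comm]
  rw [hsplit, PGaux.fanIn_apply S t, PGaux.GCZ_eq_diagonal (S.erase t)]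
  exact PGaux.assemble _ _ _ _ _ _ hcomm1 hcomm2 hH hDF
end
end
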